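/- Let S, Ŝ, W be symmetric positive definite n×n real matrices satisfying c·Ŝ ≤ S ≤ C·Ŝ and e·W ≤ Ŝ ≤ E·W with positive constants c, C, e, E. For γ ≥ 0, define S_γ := (S⁻¹ + γW⁻¹)⁻¹ and Ŝ_γ := (Ŝ⁻¹ + γW⁻¹)⁻¹. Then every eigenvalue λ of Ŝ_γ⁻¹ S_γ satisfies λ ≥ (1 + γe)/(max(1, 1/c) + γe). -/

import Mathlib

open Matrix

lemma symm_dot {n : ℕ} {A : Matrix (Fin n) (Fin n) ℝ} (hA : A.IsHermitian) (u v : Fin n → ℝ) :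
    u ⬝ᵥ A.mulVec v = v ⬝ᵥ A.mulVec u := by
  have h : Aᵀ = A := by simpa [IsSymm] using hA
  rw [dotProduct_mulVec, ← h, vecMul_transpose, dotProduct_comm, h]

/-- Loewner inequality inversion: if t•A ≤ B (both PD, t>0), then t•B⁻¹ ≤ A⁻¹. -/
lemma key_inv {n : ℕ} {A B : Matrix (Fin n) (Fin n) ℝ} (hA : A.PosDef) (hB : B.PosDef)
    {t : ℝ} (ht : 0 < t) (h : ∀ x, t * (x ⬝ᵥ A.mulVec x) ≤ x ⬝ᵥ B.mulVec x)
    (y : Fin n → ℝ) : t * (y ⬝ᵥ B⁻¹.mulVec y) ≤ y ⬝ᵥ A⁻¹.mulVec y := by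
  set u : Fin n → ℝ := t⁻¹ • A⁻¹.mulVec y with hu
  set v : Fin n → ℝ := B⁻¹.mulVec y with hv
  have hAdet : IsUnit A.det := (isUnit_iff_ne_zero).2 (ne_of_gt hA.det_pos)
  have hBdet : IsUnit B.det := (isUnit_iff_ne_zero).2 (ne_of_gt hB.det_pos)
  have hAu : A.mulVec u = t⁻¹ • y := by
    rw [hu, mulVec_smul, mulVec_mulVec, mul_nonsing_inv _ hAdet, one_mulVec]
  have hBv : B.mulVec v = y := by
    rw [hv, mulVec_mulVec, mul_nonsing_inv _ hBdet, one_mulVec]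
  have hpsd : 0 ≤ (u - v) ⬝ᵥ A.mulVec (u - v) := by simpa using hA.posSemidef.dotProduct_mulVec_nonneg (u - v)
  have h1 : t * ((u - v) ⬝ᵥ A.mulVec (u - v)) ≤ (u - v) ⬝ᵥ B.mulVec (u - v) := h _
  have huAv : u ⬝ᵥ A.mulVec v = v ⬝ᵥ A.mulVec u := symm_dot hA.1 u v
  have hexp : (u - v) ⬝ᵥ A.mulVec (u - v)
      = u ⬝ᵥ A.mulVec u - 2 * (v ⬝ᵥ A.mulVec u) + v ⬝ᵥ A.mulVec v := by
    simp only [mulVec_sub, dotProduct_sub, sub_dotProduct, huAv]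
    ring
  have hvBv : v ⬝ᵥ B.mulVec v = v ⬝ᵥ y := by rw [hBv]
  have hvAu : v ⬝ᵥ A.mulVec u = t⁻¹ * (v ⬝ᵥ y) := by
    rw [hAu, dotProduct_smul, smul_eq_mul]
  have huAu : u ⬝ᵥ A.mulVec u = t⁻¹ * (u ⬝ᵥ y) := by
    rw [hAu, dotProduct_smul, smul_eq_mul]
  have huy : u ⬝ᵥ y = t⁻¹ * (y ⬝ᵥ A⁻¹.mulVec y) := by
    rw [hu, smul_dotProduct, smul_eq_mul, dotProduct_comm]
  have hvy : v ⬝ᵥ y = y ⬝ᵥ B⁻¹.mulVec y := by rw [hv, dotProduct_comm]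
  have hvBv' : t * (v ⬝ᵥ A.mulVec v) ≤ v ⬝ᵥ y := by
    calc t * (v ⬝ᵥ A.mulVec v) ≤ v ⬝ᵥ B.mulVec v := h v
    _ = v ⬝ᵥ y := hvBv
  have ht' : t ≠ 0 := ne_of_gt ht
  have huy' : t * (u ⬝ᵥ y) = y ⬝ᵥ A⁻¹.mulVec y := by
    rw [huy, ← mul_assoc, mul_inv_cancel₀ ht', one_mul]
  have e1 : t * ((u - v) ⬝ᵥ A.mulVec (u - v))
      = (u ⬝ᵥ y) - 2 * (v ⬝ᵥ y) + t * (v ⬝ᵥ A.mulVec v) := by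
    rw [hexp, huAu, hvAu]
    field_simp
  have hgoal : t * (v ⬝ᵥ y) ≤ y ⬝ᵥ A⁻¹.mulVec y := by
    nlinarith [mul_nonneg ht.le hpsd]
  calc t * (y ⬝ᵥ B⁻¹.mulVec y) = t * (v ⬝ᵥ y) := by rw [hvy]
  _ ≤ y ⬝ᵥ A⁻¹.mulVec y := hgoal

/-- Lower eigenvalue bound for `Shatγ⁻¹ * Sγ` (Lemma 3.1, lower bound, second term). -/
theorem stmt_1 {n : ℕ} (S Shat W : Matrix (Fin n) (Fin n) ℝ)
    (hS : S.PosDef) (hShat : Shat.PosDef) (hW : W.PosDef)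
    (c C e E : ℝ) (hc : 0 < c) (hC : 0 < C) (he : 0 < e) (hE : 0 < E)
    (h1 : ∀ x : Fin n → ℝ, c * (x ⬝ᵥ Shat.mulVec x) ≤ x ⬝ᵥ S.mulVec x)
    (h2 : ∀ x : Fin n → ℝ, x ⬝ᵥ S.mulVec x ≤ C * (x ⬝ᵥ Shat.mulVec x))
    (h3 : ∀ x : Fin n → ℝ, e * (x ⬝ᵥ W.mulVec x) ≤ x ⬝ᵥ Shat.mulVec x)
    (h4 : ∀ x : Fin n → ℝ, x ⬝ᵥ Shat.mulVec x ≤ E * (x ⬝ᵥ W.mulVec x))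
    (γ : ℝ) (hγ : 0 ≤ γ)
    (Sγ Shatγ : Matrix (Fin n) (Fin n) ℝ)
    (hSγ : Sγ = (S⁻¹ + γ • W⁻¹)⁻¹) (hShatγ : Shatγ = (Shat⁻¹ + γ • W⁻¹)⁻¹)
    (lam : ℝ) (x : Fin n → ℝ) (hx : x ≠ 0)
    (heig : (Shatγ⁻¹ * Sγ).mulVec x = lam • x) :
    (1 + γ * e) / (max 1 (1 / c) + γ * e) ≤ lam := by
  set A : Matrix (Fin n) (Fin n) ℝ := S⁻¹ + γ • W⁻¹ with hA
  set B : Matrix (Fin n) (Fin n) ℝ := Shat⁻¹ + γ • W⁻¹ with hB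
  have hSi := hS.inv
  have hShati := hShat.inv
  have hWi := hW.inv
  have hWsmul : (γ • W⁻¹).PosSemidef := by
    refine PosSemidef.of_dotProduct_mulVec_nonneg ?_ (fun z => ?_)
    · show (γ • W⁻¹)ᴴ = γ • W⁻¹
      rw [conjTranspose_smul, hWi.1.eq]
      simp
    have := hWi.posSemidef.dotProduct_mulVec_nonneg z
    simp only [smul_mulVec, dotProduct_smul, smul_eq_mul, star_trivial] at *
    exact mul_nonneg hγ this
  have hApd : A.PosDef := hSi.add_posSemidef hWsmul
  have hBpd : B.PosDef := hShati.add_posSemidef hWsmul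
  have hAdet : IsUnit A.det := isUnit_iff_ne_zero.2 (ne_of_gt hApd.det_pos)
  have hBdet : IsUnit B.det := isUnit_iff_ne_zero.2 (ne_of_gt hBpd.det_pos)
  have hShatγinv : Shatγ⁻¹ = B := by rw [hShatγ, nonsing_inv_nonsing_inv _ hBdet]
  set y : Fin n → ℝ := A⁻¹.mulVec x with hy
  have hxy : A.mulVec y = x := by
    rw [hy, mulVec_mulVec, mul_nonsing_inv _ hAdet, one_mulVec]
  have hy0 : y ≠ 0 := by
    intro h0
    apply hx
    rw [← hxy, h0, mulVec_zero]
  have hBy : B.mulVec y = lam • x := by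
    rw [hy, mulVec_mulVec, ← hShatγinv, ← hSγ, heig]
  -- quadratic form quantities
  have qA : ∀ z : Fin n → ℝ, z ⬝ᵥ A.mulVec z
      = z ⬝ᵥ S⁻¹.mulVec z + γ * (z ⬝ᵥ W⁻¹.mulVec z) := by
    intro z
    simp [hA, add_mulVec, dotProduct_add, smul_mulVec, dotProduct_smul]
  have qB : ∀ z : Fin n → ℝ, z ⬝ᵥ B.mulVec z
      = z ⬝ᵥ Shat⁻¹.mulVec z + γ * (z ⬝ᵥ W⁻¹.mulVec z) := by
    intro z
    simp [hB, add_mulVec, dotProduct_add, smul_mulVec, dotProduct_smul]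
  set s : ℝ := y ⬝ᵥ S⁻¹.mulVec y with hsdef
  set a : ℝ := y ⬝ᵥ Shat⁻¹.mulVec y with hadef
  set w : ℝ := y ⬝ᵥ W⁻¹.mulVec y with hwdef
  have hspos : 0 < s := by have := hSi.dotProduct_mulVec_pos hy0; rwa [star_trivial] at this
  have hapos : 0 < a := by have := hShati.dotProduct_mulVec_pos hy0; rwa [star_trivial] at this
  have hwpos : 0 < w := by have := hWi.dotProduct_mulVec_pos hy0; rwa [star_trivial] at this
  have heq : a + γ * w = lam * (s + γ * w) := by
    have := qB y
    rw [hBy] at this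
    have h' : y ⬝ᵥ (lam • x) = lam * (y ⬝ᵥ x) := by
      rw [dotProduct_smul, smul_eq_mul]
    have h'' : y ⬝ᵥ x = s + γ * w := by rw [← hxy, qA y]
    rw [h', h''] at this
    linarith [this]
  have hcs : c * s ≤ a := key_inv hShat hS hc h1 y
  have hea : e * a ≤ w := key_inv hW hShat he h3 y
  set m : ℝ := max 1 (1 / c) with hm
  have hm1 : 1 ≤ m := le_max_left _ _
  have hmc : 1 / c ≤ m := le_max_right _ _
  have hsma : s ≤ m * a := by
    have : s ≤ (1 / c) * a := by
      rw [div_mul_eq_mul_div, le_div_iff₀ hc]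
      linarith [hcs]
    calc s ≤ (1 / c) * a := this
    _ ≤ m * a := by nlinarith [hapos]
  have hden : 0 < m + γ * e := by positivity
  rw [div_le_iff₀ hden]
  have hq : 0 < s + γ * w := by positivity
  nlinarith [mul_nonneg (mul_nonneg hγ (sub_nonneg.2 hm1)) (sub_nonneg.2 hea),
    mul_nonneg (by positivity : (0:ℝ) ≤ 1 + γ * e) (sub_nonneg.2 hsma),
    mul_pos hq hden, heq, hq]
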